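/- arXiv:2402.18803 — 3 statements merged into one kernel-verified Lean document; each statement's English description precedes it below -/
import Mathlib

section
/- For p ≥ 1, a probability weight vector w, and nonnegative vectors S, S' in R^g, M_p(S + S'; w) − M_p(S; w) ≤ ‖S'‖_∞, where ‖S'‖_∞ = max_i S'_i. In particular, the weighted power-mean malfare is 1-Lipschitz with respect to the sup norm on the nonnegative orthant. -/
open Finset

/-- Weighted power mean `M_p(S; w) = (∑ i, w i * S i ^ p) ^ (1/p)` (real exponent). -/
noncomputable def powMean {g : ℕ} (p : ℝ) (w S : Fin g → ℝ) : ℝ :=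
  (∑ i, w i * S i ^ p) ^ (1 / p)

theorem powMean_lipschitz_sup_norm {g : ℕ} (hg : 0 < g) (p : ℝ) (hp : 1 ≤ p)
    (w S S' : Fin g → ℝ)
    (hw : ∀ i, 0 ≤ w i) (hw1 : ∑ i, w i = 1)
    (hS : ∀ i, 0 ≤ S i) (hS' : ∀ i, 0 ≤ S' i) :
    powMean p w (S + S') - powMean p w S ≤
      Finset.univ.sup' (Finset.univ_nonempty_iff.mpr ⟨⟨0, hg⟩⟩) S' := by
  have hp0 : (0:ℝ) < p := lt_of_lt_of_le one_pos hp
  set c : ℝ := Finset.univ.sup' (Finset.univ_nonempty_iff.mpr ⟨⟨0, hg⟩⟩) S' with hc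
  have hc0 : 0 ≤ c := le_trans (hS' ⟨0, hg⟩) (le_sup' S' (mem_univ _))
  have hcle : ∀ i, S' i ≤ c := fun i => le_sup' S' (mem_univ i)
  rw [sub_le_iff_le_add, powMean, powMean]
  -- key identity: (w i ^ (1/p) * b) ^ p = w i * b ^ p for b ≥ 0
  have key : ∀ i, ∀ b : ℝ, 0 ≤ b → (w i ^ (1/p) * b) ^ p = w i * b ^ p := by
    intro i b hb
    rw [Real.mul_rpow (Real.rpow_nonneg (hw i) _) hb]
    rw [← Real.rpow_mul (hw i), one_div, inv_mul_cancel₀ (ne_of_gt hp0), Real.rpow_one]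
  have step1 : (∑ i, w i * (S + S') i ^ p) ^ (1/p) ≤
      (∑ i, w i * (S i + c) ^ p) ^ (1/p) := by
    apply Real.rpow_le_rpow
    · exact sum_nonneg fun i _ => mul_nonneg (hw i)
        (Real.rpow_nonneg (add_nonneg (hS i) (hS' i)) _)
    · apply sum_le_sum
      intro i _
      exact mul_le_mul_of_nonneg_left
        (Real.rpow_le_rpow (add_nonneg (hS i) (hS' i))
          (add_le_add le_rfl (hcle i)) (le_of_lt hp0)) (hw i)
    · positivity
  refine step1.trans ?_
  have mink := Real.Lp_add_le (univ : Finset (Fin g))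
    (fun i => w i ^ (1/p) * S i) (fun i => w i ^ (1/p) * c) hp
  have e1 : ∀ i : Fin g, |w i ^ (1/p) * S i + w i ^ (1/p) * c| ^ p = w i * (S i + c) ^ p := by
    intro i
    rw [← mul_add, abs_of_nonneg (mul_nonneg (Real.rpow_nonneg (hw i) _)
      (add_nonneg (hS i) hc0)), key i _ (add_nonneg (hS i) hc0)]
  have e2 : ∀ i : Fin g, |w i ^ (1/p) * S i| ^ p = w i * S i ^ p := by
    intro i
    rw [abs_of_nonneg (mul_nonneg (Real.rpow_nonneg (hw i) _) (hS i)), key i _ (hS i)]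
  have e3 : ∀ i : Fin g, |w i ^ (1/p) * c| ^ p = w i * c ^ p := by
    intro i
    rw [abs_of_nonneg (mul_nonneg (Real.rpow_nonneg (hw i) _) hc0), key i _ hc0]
  simp only [e1, e2, e3] at mink
  have e4 : (∑ i : Fin g, w i * c ^ p) ^ (1/p) = c := by
    rw [← Finset.sum_mul, hw1, one_mul, ← Real.rpow_mul hc0]
    rw [one_div, mul_inv_cancel₀ (ne_of_gt hp0), Real.rpow_one]
  rw [e4] at mink
  calc (∑ i, w i * (S i + c) ^ p) ^ (1/p) ≤ _ := mink
    _ = c + (∑ i, w i * S i ^ p) ^ (1/p) := add_comm _ _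
end

section
/- Fix a group index i, real-valued functions R̂_j on a hypothesis class H for j ≠ i, a function R_i on H (the true risk of group i), numbers η ≥ ε ≥ 0, and a monotone malfare W : R^g → R. Define H* = { h ∈ H : W(j ↦ (R̂_j(h) if j ≠ i, R_i(h) − η if j = i)) ≤ inf_{h' ∈ H} W(j ↦ (R̂_j(h') if j ≠ i, R_i(h') + ε if j = i)) }. Suppose R̂_i : H → R satisfies: (a) R_i(ĥ) − η ≤ R̂_i(ĥ) for the empirical malfare minimizer ĥ = argmin_{h ∈ H} W(j ↦ R̂_j(h)), and (b) there exists h'' ∈ H with W(j ↦ (R̂_j(h'') if j≠i, R_i(h'') + ε if j=i)) within any δ > 0 of the infimum and R̂_i(h'') ≤ R_i(h'') + ε. Then ĥ ∈ H*. -/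
theorem emm_in_theoretical_class {g : ℕ} {H : Type*} [Nonempty H]
    (W : (Fin g → ℝ) → ℝ)
    (hWmono : ∀ S S' : Fin g → ℝ, (∀ j, S j ≤ S' j) → W S ≤ W S')
    (i : Fin g)
    (Rhat : Fin g → H → ℝ) (Ri : H → ℝ)
    (η ε : ℝ) (hε : 0 ≤ ε) (hηε : ε ≤ η)
    (hbdd : BddBelow (Set.range fun h' : H =>
      W (fun j => if j = i then Ri h' + ε else Rhat j h')))
    (hhat : H)
    (hhat_min : ∀ h : H, W (fun j => Rhat j hhat) ≤ W (fun j => Rhat j h))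
    -- (a): lower deviation bound at the empirical malfare minimizer
    (ha : Ri hhat - η ≤ Rhat i hhat)
    -- (b): near-optimal h'' in the pessimistic objective with an upper deviation bound
    (hb : ∀ δ : ℝ, 0 < δ → ∃ h'' : H,
      W (fun j => if j = i then Ri h'' + ε else Rhat j h'') ≤
        (⨅ h' : H, W (fun j => if j = i then Ri h' + ε else Rhat j h')) + δ ∧
      Rhat i h'' ≤ Ri h'' + ε) :
    W (fun j => if j = i then Ri hhat - η else Rhat j hhat) ≤
      ⨅ h' : H, W (fun j => if j = i then Ri h' + ε else Rhat j h') := by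
  apply le_of_forall_pos_le_add
  intro δ hδ
  obtain ⟨h'', hb1, hb2⟩ := hb δ hδ
  calc W (fun j => if j = i then Ri hhat - η else Rhat j hhat)
      ≤ W (fun j => Rhat j hhat) := by
        apply hWmono; intro j
        by_cases hj : j = i
        · subst hj; simp [ha]
        · simp [hj]
    _ ≤ W (fun j => Rhat j h'') := hhat_min h''
    _ ≤ W (fun j => if j = i then Ri h'' + ε else Rhat j h'') := by
        apply hWmono; intro j
        by_cases hj : j = i
        · subst hj; simp [hb2]
        · simp [hj]
    _ ≤ _ := hb1
end

section
/- Let f : R → R be λ-Lipschitz and g : Z → R a class of functions indexed by a set Θ, i.e., functions z ↦ g_θ(z). For a fixed sample z ∈ Z^m and Rademacher variables σ, the empirical Rademacher average of the composed class {f ∘ g_θ : θ ∈ Θ} satisfies E_σ[ sup_θ (1/m) Σ_i σ_i f(g_θ(z_i)) ] ≤ λ · E_σ[ sup_θ (1/m) Σ_i σ_i g_θ(z_i) ] (Talagrand's contraction lemma for empirical Rademacher averages). -/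
open Finset

/-- Interpret a Boolean sign vector as a ±1 real sign. -/
def sgn (b : Bool) : ℝ := if b then 1 else -1

lemma sgn_not (b : Bool) : sgn (!b) = - sgn b := by cases b <;> simp [sgn]

lemma abs_sgn (b : Bool) : |sgn b| = 1 := by cases b <;> simp [sgn]

section aux

variable {Θ : Type*} [Nonempty Θ]

lemma key_ineq (f : ℝ → ℝ) (lam : ℝ)
    (hf : ∀ a b : ℝ, |f a - f b| ≤ lam * |a - b|)
    (a b : Θ → ℝ)
    (h1 : BddAbove (Set.range fun θ => a θ + lam * b θ))
    (h2 : BddAbove (Set.range fun θ => a θ - lam * b θ)) :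
    (⨆ θ, a θ + f (b θ)) + (⨆ θ, a θ - f (b θ)) ≤
      (⨆ θ, a θ + lam * b θ) + (⨆ θ, a θ - lam * b θ) := by
  set S := (⨆ θ, a θ + lam * b θ) + (⨆ θ, a θ - lam * b θ) with hS
  have H : ∀ θ θ' : Θ, (a θ + f (b θ)) + (a θ' - f (b θ')) ≤ S := by
    intro θ θ'
    have hfb : f (b θ) - f (b θ') ≤ lam * |b θ - b θ'| :=
      (le_abs_self _).trans (hf _ _)
    rcases le_total (b θ') (b θ) with hb | hb
    · have h3 : f (b θ) - f (b θ') ≤ lam * (b θ - b θ') := by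
        rwa [abs_of_nonneg (by linarith)] at hfb
      have h4 := le_ciSup h1 θ
      have h5 := le_ciSup h2 θ'
      rw [hS]; linarith
    · have h3 : f (b θ) - f (b θ') ≤ lam * (b θ' - b θ) := by
        rw [abs_of_nonpos (by linarith), neg_sub] at hfb
        exact hfb
      have h4 := le_ciSup h1 θ'
      have h5 := le_ciSup h2 θ
      rw [hS]; linarith
  have hX : (⨆ θ, a θ + f (b θ)) ≤ S - (⨆ θ, a θ - f (b θ)) := by
    refine ciSup_le fun θ => ?_
    rw [le_sub_iff_add_le, add_comm, ← le_sub_iff_add_le]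
    exact ciSup_le fun θ' => by linarith [H θ θ']
  linarith [hX]

lemma key_ineq' (f : ℝ → ℝ) (lam : ℝ)
    (hf : ∀ a b : ℝ, |f a - f b| ≤ lam * |a - b|)
    (a b : Θ → ℝ) (s : ℝ) (hs : s = 1 ∨ s = -1)
    (h1 : BddAbove (Set.range fun θ => a θ + s * (lam * b θ)))
    (h2 : BddAbove (Set.range fun θ => a θ - s * (lam * b θ))) :
    (⨆ θ, a θ + s * f (b θ)) + (⨆ θ, a θ - s * f (b θ)) ≤
      (⨆ θ, a θ + s * (lam * b θ)) + (⨆ θ, a θ - s * (lam * b θ)) := by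
  rcases hs with hs | hs
  · subst hs
    simp only [one_mul]
    exact key_ineq f lam hf a b (by simpa using h1) (by simpa using h2)
  · subst hs
    simp only [neg_one_mul, ← sub_eq_add_neg, sub_neg_eq_add] at h1 h2 ⊢
    rw [add_comm ((⨆ θ, a θ - f (b θ))) _, add_comm ((⨆ θ, a θ - lam * b θ)) _]
    exact key_ineq f lam hf a b h2 h1

variable {m : ℕ}

/-- Mixed sum: coordinates in `S` use `f ∘ h i`, others use `lam * h i`. -/
def T (f : ℝ → ℝ) (lam : ℝ) (h : Fin m → Θ → ℝ) (S : Finset (Fin m))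
    (σ : Fin m → Bool) (θ : Θ) : ℝ :=
  ∑ i, sgn (σ i) * (if i ∈ S then f (h i θ) else lam * h i θ)

lemma T_bdd (f : ℝ → ℝ) (lam : ℝ) (hlam : 0 ≤ lam)
    (hf : ∀ a b : ℝ, |f a - f b| ≤ lam * |a - b|) (h : Fin m → Θ → ℝ)
    (Hb : ∀ σ : Fin m → Bool,
      BddAbove (Set.range fun θ => ∑ i, sgn (σ i) * (lam * h i θ)))
    (S : Finset (Fin m)) (σ : Fin m → Bool) :
    BddAbove (Set.range fun θ => T f lam h S σ θ) := by
  choose M hM using Hb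
  set C : ℝ := ∑ τ : Fin m → Bool, max (M τ) 0 with hC
  have habs : ∀ θ, ∑ i, lam * |h i θ| ≤ C := by
    intro θ
    set τ : Fin m → Bool := fun i => decide (0 ≤ h i θ) with hτ
    have he : ∑ i, lam * |h i θ| = ∑ i, sgn (τ i) * (lam * h i θ) := by
      refine Finset.sum_congr rfl fun i _ => ?_
      rcases le_or_gt 0 (h i θ) with hi | hi
      · have hsg : sgn (τ i) = 1 := by rw [hτ]; simp [sgn, hi]
        rw [hsg, abs_of_nonneg hi, one_mul]
      · have hsg : sgn (τ i) = -1 := by rw [hτ]; simp [sgn, not_le.mpr hi]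
        rw [hsg, abs_of_neg hi]; ring
    calc ∑ i, lam * |h i θ| = ∑ i, sgn (τ i) * (lam * h i θ) := he
      _ ≤ M τ := hM τ ⟨θ, rfl⟩
      _ ≤ C := by
          rw [hC]
          exact le_trans (le_max_left _ _)
            (Finset.single_le_sum (f := fun τ' : Fin m → Bool => max (M τ') 0)
              (fun τ' _ => le_max_right _ _) (Finset.mem_univ τ))
  refine ⟨(m : ℝ) * |f 0| + C, ?_⟩
  rintro x ⟨θ, rfl⟩
  have hterm : ∀ i : Fin m,
      sgn (σ i) * (if i ∈ S then f (h i θ) else lam * h i θ) ≤ |f 0| + lam * |h i θ| := by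
    intro i
    have h1 : sgn (σ i) * (if i ∈ S then f (h i θ) else lam * h i θ) ≤
        |if i ∈ S then f (h i θ) else lam * h i θ| := by
      calc sgn (σ i) * (if i ∈ S then f (h i θ) else lam * h i θ)
          ≤ |sgn (σ i) * (if i ∈ S then f (h i θ) else lam * h i θ)| := le_abs_self _
        _ = |if i ∈ S then f (h i θ) else lam * h i θ| := by rw [abs_mul, abs_sgn, one_mul]
    refine h1.trans ?_
    split_ifs with hiS
    · have h2 := hf (h i θ) 0
      rw [sub_zero] at h2
      have h3 : |f (h i θ)| - |f 0| ≤ |f (h i θ) - f 0| := abs_sub_abs_le_abs_sub _ _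
      linarith
    · rw [abs_mul, abs_of_nonneg hlam]
      linarith [abs_nonneg (f 0)]
  calc T f lam h S σ θ ≤ ∑ i, (|f 0| + lam * |h i θ|) :=
        Finset.sum_le_sum fun i _ => hterm i
    _ = (m : ℝ) * |f 0| + ∑ i, lam * |h i θ| := by
        rw [Finset.sum_add_distrib, Finset.sum_const, Finset.card_univ, Fintype.card_fin,
          nsmul_eq_mul]
    _ ≤ (m : ℝ) * |f 0| + C := by linarith [habs θ]

lemma step (f : ℝ → ℝ) (lam : ℝ)
    (hf : ∀ a b : ℝ, |f a - f b| ≤ lam * |a - b|) (h : Fin m → Θ → ℝ)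
    (S' : Finset (Fin m)) (j : Fin m) (hj : j ∉ S')
    (hbdd : ∀ σ : Fin m → Bool, BddAbove (Set.range fun θ => T f lam h S' σ θ)) :
    ∑ σ : Fin m → Bool, (⨆ θ, T f lam h (insert j S') σ θ) ≤
      ∑ σ : Fin m → Bool, (⨆ θ, T f lam h S' σ θ) := by
  set flip : (Fin m → Bool) → (Fin m → Bool) := fun σ => Function.update σ j (!σ j) with hflip
  have hinv : Function.Involutive flip := by
    intro σ; funext i
    by_cases hij : i = j
    · subst hij; simp [hflip]
    · simp [hflip, Function.update_of_ne hij]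
  have hflipj : ∀ σ, flip σ j = !σ j := by intro σ; simp [hflip]
  have hflipne : ∀ σ (i : Fin m), i ≠ j → flip σ i = σ i := by
    intro σ i hij; simp [hflip, Function.update_of_ne hij]
  have point : ∀ σ : Fin m → Bool,
      (⨆ θ, T f lam h (insert j S') σ θ) + (⨆ θ, T f lam h (insert j S') (flip σ) θ) ≤
      (⨆ θ, T f lam h S' σ θ) + (⨆ θ, T f lam h S' (flip σ) θ) := by
    intro σ
    set a : Θ → ℝ := fun θ => ∑ i ∈ Finset.univ.erase j,
      sgn (σ i) * (if i ∈ S' then f (h i θ) else lam * h i θ) with ha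
    have herase : ∀ (σ' : Fin m → Bool), (∀ i : Fin m, i ≠ j → σ' i = σ i) →
        ∀ (Q : Finset (Fin m)) (θ : Θ),
        ∑ i ∈ Finset.univ.erase j, sgn (σ' i) * (if i ∈ insert j Q then f (h i θ) else lam * h i θ)
          = ∑ i ∈ Finset.univ.erase j, sgn (σ' i) * (if i ∈ Q then f (h i θ) else lam * h i θ) := by
      intro σ' _ Q θ
      refine Finset.sum_congr rfl fun i hi => ?_
      have hij : i ≠ j := Finset.ne_of_mem_erase hi
      simp [Finset.mem_insert, hij]
    have hsame : ∀ (σ' : Fin m → Bool), (∀ i : Fin m, i ≠ j → σ' i = σ i) → ∀ θ,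
        ∑ i ∈ Finset.univ.erase j, sgn (σ' i) * (if i ∈ S' then f (h i θ) else lam * h i θ) = a θ := by
      intro σ' hσ' θ
      refine Finset.sum_congr rfl fun i hi => ?_
      rw [hσ' i (Finset.ne_of_mem_erase hi)]
    have hTins : ∀ θ, T f lam h (insert j S') σ θ = a θ + sgn (σ j) * f (h j θ) := by
      intro θ
      rw [T, ← Finset.sum_erase_add _ _ (Finset.mem_univ j)]
      rw [herase σ (fun _ _ => rfl) S' θ, hsame σ (fun _ _ => rfl) θ]
      simp [Finset.mem_insert_self]
    have hTins' : ∀ θ, T f lam h (insert j S') (flip σ) θ = a θ - sgn (σ j) * f (h j θ) := by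
      intro θ
      rw [T, ← Finset.sum_erase_add _ _ (Finset.mem_univ j)]
      rw [herase (flip σ) (hflipne σ) S' θ, hsame (flip σ) (hflipne σ) θ]
      rw [hflipj σ, sgn_not]
      simp [Finset.mem_insert_self, sub_eq_add_neg]
    have hTS1 : ∀ θ, T f lam h S' σ θ = a θ + sgn (σ j) * (lam * h j θ) := by
      intro θ
      rw [T, ← Finset.sum_erase_add _ _ (Finset.mem_univ j)]
      rw [hsame σ (fun _ _ => rfl) θ]
      simp [hj]
    have hTS2 : ∀ θ, T f lam h S' (flip σ) θ = a θ - sgn (σ j) * (lam * h j θ) := by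
      intro θ
      rw [T, ← Finset.sum_erase_add _ _ (Finset.mem_univ j)]
      rw [hsame (flip σ) (hflipne σ) θ]
      rw [hflipj σ, sgn_not]
      simp [hj, sub_eq_add_neg]
    have hs : sgn (σ j) = 1 ∨ sgn (σ j) = -1 := by cases σ j <;> simp [sgn]
    have hb1 : BddAbove (Set.range fun θ => a θ + sgn (σ j) * (lam * h j θ)) := by
      have := hbdd σ; simp only [hTS1] at this; exact this
    have hb2 : BddAbove (Set.range fun θ => a θ - sgn (σ j) * (lam * h j θ)) := by
      have := hbdd (flip σ); simp only [hTS2] at this; exact this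
    simp only [hTins, hTins', hTS1, hTS2]
    exact key_ineq' f lam hf a (fun θ => h j θ) (sgn (σ j)) hs hb1 hb2
  have big := Finset.sum_le_sum (fun σ (_ : σ ∈ Finset.univ) => point σ)
  have h1 := Equiv.sum_comp (Function.Involutive.toPerm flip hinv)
      (fun σ => ⨆ θ, T f lam h (insert j S') σ θ)
  have h2 := Equiv.sum_comp (Function.Involutive.toPerm flip hinv)
      (fun σ => ⨆ θ, T f lam h S' σ θ)
  simp only [Function.Involutive.coe_toPerm] at h1 h2
  rw [Finset.sum_add_distrib, Finset.sum_add_distrib, h1, h2] at big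
  linarith [big]

lemma core (f : ℝ → ℝ) (lam : ℝ) (hlam : 0 ≤ lam)
    (hf : ∀ a b : ℝ, |f a - f b| ≤ lam * |a - b|) (h : Fin m → Θ → ℝ)
    (Hb : ∀ σ : Fin m → Bool,
      BddAbove (Set.range fun θ => ∑ i, sgn (σ i) * (lam * h i θ))) :
    ∑ σ : Fin m → Bool, (⨆ θ, ∑ i, sgn (σ i) * f (h i θ)) ≤
      ∑ σ : Fin m → Bool, (⨆ θ, ∑ i, sgn (σ i) * (lam * h i θ)) := by
  have main : ∀ S : Finset (Fin m),
      ∑ σ : Fin m → Bool, (⨆ θ, T f lam h S σ θ) ≤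
        ∑ σ : Fin m → Bool, (⨆ θ, T f lam h ∅ σ θ) := by
    intro S
    induction S using Finset.induction_on with
    | empty => exact le_refl _
    | @insert j S' hj ih =>
        exact le_trans (step f lam hf h S' j hj (T_bdd f lam hlam hf h Hb S')) ih
  have := main Finset.univ
  simpa [T] using this

end aux

theorem rademacher_contraction {Z : Type*} {Θ : Type*} [Nonempty Θ] {m : ℕ}
    (f : ℝ → ℝ) (lam : ℝ) (hlam : 0 ≤ lam)
    (hf : ∀ a b : ℝ, |f a - f b| ≤ lam * |a - b|)
    (G : Θ → Z → ℝ) (z : Fin m → Z)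
    (hbdd1 : ∀ σ : Fin m → Bool,
      BddAbove (Set.range fun θ => (1 / (m : ℝ)) * ∑ i, sgn (σ i) * f (G θ (z i))))
    (hbdd2 : ∀ σ : Fin m → Bool,
      BddAbove (Set.range fun θ => (1 / (m : ℝ)) * ∑ i, sgn (σ i) * G θ (z i))) :
    (∑ σ : Fin m → Bool, ((1 : ℝ) / 2) ^ m *
        ⨆ θ, (1 / (m : ℝ)) * ∑ i, sgn (σ i) * f (G θ (z i))) ≤
      lam * ∑ σ : Fin m → Bool, ((1 : ℝ) / 2) ^ m *
        ⨆ θ, (1 / (m : ℝ)) * ∑ i, sgn (σ i) * G θ (z i) := by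
  rcases Nat.eq_zero_or_pos m with hm | hm
  · subst hm
    simp [ciSup_const]
  · have hm0 : (0:ℝ) < (m:ℝ) := by exact_mod_cast hm
    have Hb : ∀ σ : Fin m → Bool,
        BddAbove (Set.range fun θ => ∑ i, sgn (σ i) * (lam * G θ (z i))) := by
      intro σ
      obtain ⟨M, hM⟩ := hbdd2 σ
      refine ⟨lam * ((m:ℝ) * M), ?_⟩
      rintro x ⟨θ, rfl⟩
      have h1 : (1/(m:ℝ)) * ∑ i, sgn (σ i) * G θ (z i) ≤ M := hM ⟨θ, rfl⟩
      have h2 : ∑ i, sgn (σ i) * G θ (z i) ≤ (m:ℝ) * M := by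
        have h3 := mul_le_mul_of_nonneg_left h1 hm0.le
        rw [← mul_assoc, mul_one_div, div_self hm0.ne', one_mul] at h3
        exact h3
      calc ∑ i, sgn (σ i) * (lam * G θ (z i))
          = lam * ∑ i, sgn (σ i) * G θ (z i) := by
            rw [Finset.mul_sum]; exact Finset.sum_congr rfl fun i _ => by ring
        _ ≤ lam * ((m:ℝ) * M) := mul_le_mul_of_nonneg_left h2 hlam
    have Hcore := core f lam hlam hf (fun i θ => G θ (z i)) Hb
    have hLHS : ∀ σ : Fin m → Bool,
        (⨆ θ, (1/(m:ℝ)) * ∑ i, sgn (σ i) * f (G θ (z i))) =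
          (1/(m:ℝ)) * ⨆ θ, ∑ i, sgn (σ i) * f (G θ (z i)) := fun σ =>
      (Real.mul_iSup_of_nonneg (by positivity) _).symm
    have hRHS : ∀ σ : Fin m → Bool,
        (⨆ θ, (1/(m:ℝ)) * ∑ i, sgn (σ i) * G θ (z i)) =
          (1/(m:ℝ)) * ⨆ θ, ∑ i, sgn (σ i) * G θ (z i) := fun σ =>
      (Real.mul_iSup_of_nonneg (by positivity) _).symm
    have hlamS : ∀ σ : Fin m → Bool,
        lam * (⨆ θ, ∑ i, sgn (σ i) * G θ (z i)) =
          ⨆ θ, ∑ i, sgn (σ i) * (lam * G θ (z i)) := by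
      intro σ
      rw [Real.mul_iSup_of_nonneg hlam]
      congr 1; funext θ
      rw [Finset.mul_sum]; exact Finset.sum_congr rfl fun i _ => by ring
    simp only [hLHS, hRHS]
    rw [Finset.mul_sum]
    have hre : ∀ σ : Fin m → Bool,
        lam * (((1:ℝ)/2)^m * ((1/(m:ℝ)) * (⨆ θ, ∑ i, sgn (σ i) * G θ (z i)))) =
          (((1:ℝ)/2)^m * (1/(m:ℝ))) * (lam * ⨆ θ, ∑ i, sgn (σ i) * G θ (z i)) := fun σ => by
      ring
    simp only [hre, hlamS]
    have hre2 : ∀ σ : Fin m → Bool,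
        ((1:ℝ)/2)^m * ((1/(m:ℝ)) * (⨆ θ, ∑ i, sgn (σ i) * f (G θ (z i)))) =
          (((1:ℝ)/2)^m * (1/(m:ℝ))) * (⨆ θ, ∑ i, sgn (σ i) * f (G θ (z i))) := fun σ => by
      ring
    simp only [hre2]
    rw [← Finset.mul_sum, ← Finset.mul_sum]
    exact mul_le_mul_of_nonneg_left Hcore (by positivity)
end
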